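/- arXiv:2604.23184 — 3 statements merged into one kernel-verified Lean document; each statement's English description precedes it below -/
import Mathlib

section
/- Let p > 1, k ≥ 1, 0 < q ≤ 1 and γ > 0, and let t₀ be the unique positive root of f(t) = t^p - qγ·k^(-(p-1)/p)·t - qγ·k^(-(p-1)/p) - 1. Then t₀ > (kp)^(-1/p) · (qγ)^(1/(p-1)). -/
theorem root_lower_bound (p k q γ t₀ : ℝ) (hp : 1 < p) (hk : 1 ≤ k)
    (hq0 : 0 < q) (hq1 : q ≤ 1) (hγ : 0 < γ) (ht₀ : 0 < t₀)
    (hroot : t₀ ^ p - (q * γ * k ^ (-(p - 1) / p)) * t₀ - q * γ * k ^ (-(p - 1) / p) - 1 = 0) :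
    t₀ > (k * p) ^ (-(1 / p)) * (q * γ) ^ (1 / (p - 1)) := by
  by_contra h
  push_neg at h
  have hp0 : (0:ℝ) < p := by linarith
  have hk0 : (0:ℝ) < k := by linarith
  have hkp : (0:ℝ) < k * p := by positivity
  have hqγ : (0:ℝ) < q * γ := by positivity
  have hp1 : (0:ℝ) < p - 1 := by linarith
  have hkpow : (0:ℝ) < k ^ (-(p - 1) / p) := Real.rpow_pos_of_pos hk0 _
  set c := q * γ * k ^ (-(p - 1) / p) with hc
  have hc0 : 0 < c := by positivity
  set B := (k * p) ^ (-(1 / p)) * (q * γ) ^ (1 / (p - 1)) with hB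
  have hB1 : (0:ℝ) < (k * p) ^ (-(1 / p)) := Real.rpow_pos_of_pos hkp _
  have hB2 : (0:ℝ) < (q * γ) ^ (1 / (p - 1)) := Real.rpow_pos_of_pos hqγ _
  have hB0 : 0 < B := by positivity
  -- t₀^(p-1) > c
  have htpow : t₀ ^ p = t₀ ^ (p - 1) * t₀ := by
    rw [← Real.rpow_add_one (ne_of_gt ht₀)]
    ring_nf
  have ht1 : c < t₀ ^ (p - 1) := by
    rw [htpow] at hroot
    nlinarith [Real.rpow_pos_of_pos ht₀ (p - 1)]
  -- B^(p-1) < c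
  have hBpow : B ^ (p - 1) = (k * p) ^ (-(p - 1) / p) * (q * γ) := by
    rw [hB, Real.mul_rpow hB1.le hB2.le, ← Real.rpow_mul hkp.le, ← Real.rpow_mul hqγ.le]
    have e1 : -(1 / p) * (p - 1) = -(p - 1) / p := by
      field_simp
    have e2 : 1 / (p - 1) * (p - 1) = 1 := by
      field_simp
    rw [e1, e2, Real.rpow_one]
  have hBlt : B ^ (p - 1) < c := by
    rw [hBpow, hc, Real.mul_rpow hk0.le hp0.le]
    have hpl : p ^ (-(p - 1) / p) < 1 :=
      Real.rpow_lt_one_of_one_lt_of_neg hp (by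
        apply div_neg_of_neg_of_pos <;> linarith)
    nlinarith
  -- monotonicity
  have hmono : t₀ ^ (p - 1) ≤ B ^ (p - 1) :=
    Real.rpow_le_rpow ht₀.le h hp1.le
  linarith
end

section
/- Let x ∈ ℝⁿ be k-sparse, let h ∈ ℝⁿ, and suppose ‖x‖₁/‖x‖_p^q ≥ ‖x+h‖₁/‖x+h‖_p^q with x ≠ 0, x + h ≠ 0, p > 1, 0 < q ≤ 1, and ‖x‖₁/‖x‖_p ≤ γ. Then, denoting by h_(k) the vector of the k largest-magnitude entries of h (others zeroed) and h_(-k) = h - h_(k), one has ‖h_(-k)‖₁ ≤ (qγ + k^(1-1/p))·‖h_(k)‖_p + qγ·‖h_(-k)‖_p. -/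
open scoped Classical

/-- If `T` consists of largest-magnitude entries and `S.card ≤ T.card`, then the
`ℓ¹` mass of `h` on `S` is at most that on `T`. -/
lemma aux_sum_abs_le_sum_abs {ι : Type*} [DecidableEq ι] (S T : Finset ι) (h : ι → ℝ)
    (hcard : S.card ≤ T.card)
    (hTl : ∀ i ∈ T, ∀ j ∉ T, |h j| ≤ |h i|) :
    ∑ i ∈ S, |h i| ≤ ∑ i ∈ T, |h i| := by
  have key : ∑ i ∈ S \ T, |h i| ≤ ∑ i ∈ T \ S, |h i| := by
    rcases (S \ T).eq_empty_or_nonempty with he | hne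
    · rw [he, Finset.sum_empty]
      exact Finset.sum_nonneg fun i _ => abs_nonneg _
    · have hc1 := Finset.card_sdiff_add_card_inter S T
      have hc2 := Finset.card_sdiff_add_card_inter T S
      have hinter : (S ∩ T).card = (T ∩ S).card := by rw [Finset.inter_comm]
      have hcard' : (S \ T).card ≤ (T \ S).card := by omega
      have hTS : (T \ S).Nonempty := by
        rw [← Finset.card_pos]
        have := Finset.card_pos.mpr hne
        omega
      obtain ⟨i0, hi0, hmin⟩ := Finset.exists_min_image (T \ S) (fun i => |h i|) hTS
      have hi0T : i0 ∈ T := (Finset.mem_sdiff.mp hi0).1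
      calc ∑ i ∈ S \ T, |h i| ≤ ∑ _i ∈ S \ T, |h i0| :=
            Finset.sum_le_sum fun j hj => hTl i0 hi0T j (Finset.mem_sdiff.mp hj).2
        _ = ((S \ T).card : ℝ) * |h i0| := by rw [Finset.sum_const, nsmul_eq_mul]
        _ ≤ ((T \ S).card : ℝ) * |h i0| := by
            apply mul_le_mul_of_nonneg_right _ (abs_nonneg _)
            exact_mod_cast hcard'
        _ ≤ ∑ i ∈ T \ S, |h i| := by
            have := Finset.card_nsmul_le_sum (T \ S) (fun i => |h i|) (|h i0|)
              (fun i hi => hmin i hi)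
            simpa [nsmul_eq_mul] using this
  have h1 : ∑ i ∈ S ∩ T, |h i| + ∑ i ∈ S \ T, |h i| = ∑ i ∈ S, |h i| :=
    Finset.sum_inter_add_sum_sdiff S T _
  have h2 : ∑ i ∈ T ∩ S, |h i| + ∑ i ∈ T \ S, |h i| = ∑ i ∈ T, |h i| :=
    Finset.sum_inter_add_sum_sdiff T S _
  rw [Finset.inter_comm] at h2
  linarith

set_option maxHeartbeats 1000000 in
theorem recovery_cone_condition (n k : ℕ) (p q γ : ℝ) (hp : 1 < p)
    (hq0 : 0 < q) (hq1 : q ≤ 1) (hγ : 0 < γ)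
    (x h : Fin n → ℝ) (hx : x ≠ 0) (hxh : x + h ≠ 0)
    (hsparse : (Finset.univ.filter fun i => x i ≠ 0).card ≤ k)
    (hγbd : (∑ i, |x i|) / (∑ i, |x i| ^ p) ^ (1 / p) ≤ γ)
    (T : Finset (Fin n)) (hT : T.card = k)
    (hTlargest : ∀ i ∈ T, ∀ j ∉ T, |h j| ≤ |h i|)
    (hineq : (∑ i, |x i|) / ((∑ i, |x i| ^ p) ^ (1 / p)) ^ q
        ≥ (∑ i, |x i + h i|) / ((∑ i, |x i + h i| ^ p) ^ (1 / p)) ^ q) :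
    ∑ i, |(if i ∈ T then 0 else h i)|
      ≤ (q * γ + (k : ℝ) ^ (1 - 1 / p)) * (∑ i, |(if i ∈ T then h i else 0)| ^ p) ^ (1 / p)
        + q * γ * (∑ i, |(if i ∈ T then 0 else h i)| ^ p) ^ (1 / p) := by
  have hp0 : (0 : ℝ) < p := lt_trans one_pos hp
  set A : ℝ := ∑ i, |x i| with hA
  set B : ℝ := (∑ i, |x i| ^ p) ^ (1 / p) with hB
  set C : ℝ := ∑ i, |x i + h i| with hC
  set D : ℝ := (∑ i, |x i + h i| ^ p) ^ (1 / p) with hD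
  set Hp : ℝ := (∑ i, |h i| ^ p) ^ (1 / p) with hHp
  set aP : ℝ := (∑ i, |(if i ∈ T then h i else 0)| ^ p) ^ (1 / p) with haP
  set bP : ℝ := (∑ i, |(if i ∈ T then 0 else h i)| ^ p) ^ (1 / p) with hbP
  set a : ℝ := ∑ i ∈ T, |h i| with ha
  -- positivity of B and D
  obtain ⟨i0, hi0⟩ : ∃ i, x i ≠ 0 := Function.ne_iff.mp hx
  obtain ⟨i1, hi1⟩ : ∃ i, x i + h i ≠ 0 := Function.ne_iff.mp hxh
  have hBpos : 0 < B := by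
    apply Real.rpow_pos_of_pos
    apply Finset.sum_pos' (fun i _ => Real.rpow_nonneg (abs_nonneg _) p)
    exact ⟨i0, Finset.mem_univ _, Real.rpow_pos_of_pos (abs_pos.mpr hi0) p⟩
  have hDpos : 0 < D := by
    apply Real.rpow_pos_of_pos
    apply Finset.sum_pos' (fun i _ => Real.rpow_nonneg (abs_nonneg _) p)
    exact ⟨i1, Finset.mem_univ _, Real.rpow_pos_of_pos (abs_pos.mpr hi1) p⟩
  have hApos : 0 < A := by
    apply Finset.sum_pos' (fun i _ => abs_nonneg _)
    exact ⟨i0, Finset.mem_univ _, abs_pos.mpr hi0⟩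
  have hHpnn : 0 ≤ Hp := Real.rpow_nonneg
    (Finset.sum_nonneg fun i _ => Real.rpow_nonneg (abs_nonneg _) p) _
  have haPnn : 0 ≤ aP := Real.rpow_nonneg
    (Finset.sum_nonneg fun i _ => Real.rpow_nonneg (abs_nonneg _) p) _
  have hbPnn : 0 ≤ bP := Real.rpow_nonneg
    (Finset.sum_nonneg fun i _ => Real.rpow_nonneg (abs_nonneg _) p) _
  -- Step 1: upper bound on C
  have hCub : C ≤ A + q * γ * Hp := by
    have hDq : (0:ℝ) < D ^ q := Real.rpow_pos_of_pos hDpos q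
    have hBq : (0:ℝ) < B ^ q := Real.rpow_pos_of_pos hBpos q
    have h1 : C ≤ A * (D / B) ^ q := by
      have := hineq
      have h2 : C / D ^ q ≤ A / B ^ q := hineq
      have h3 : C ≤ (A / B ^ q) * D ^ q := by
        rw [← div_le_iff₀ hDq] at *
        exact h2
      calc C ≤ (A / B ^ q) * D ^ q := h3
        _ = A * (D / B) ^ q := by
            rw [Real.div_rpow hDpos.le hBpos.le]; ring
    have hMink : D ≤ B + Hp := Real.Lp_add_le Finset.univ x h hp.le
    have h4 : (D / B) ^ q ≤ 1 + q * (Hp / B) := by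
      have h5 : D / B ≤ 1 + Hp / B := by
        rw [div_le_iff₀ hBpos, add_mul, one_mul, div_mul_cancel₀ _ hBpos.ne']
        exact hMink
      calc (D / B) ^ q ≤ (1 + Hp / B) ^ q :=
            Real.rpow_le_rpow (by positivity) h5 hq0.le
        _ ≤ 1 + q * (Hp / B) :=
            rpow_one_add_le_one_add_mul_self
              (le_trans (by norm_num : (-1:ℝ) ≤ 0) (by positivity)) hq0.le hq1
    have h6 : A * (D / B) ^ q ≤ A * (1 + q * (Hp / B)) :=
      mul_le_mul_of_nonneg_left h4 hApos.le
    have h7 : A * (1 + q * (Hp / B)) = A + q * (A / B) * Hp := by ring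
    have h8 : q * (A / B) * Hp ≤ q * γ * Hp := by
      apply mul_le_mul_of_nonneg_right _ hHpnn
      exact mul_le_mul_of_nonneg_left hγbd hq0.le
    linarith
  -- Step 2: lower bound on C
  have hClb : A - a + (∑ i ∈ Tᶜ, |h i|) ≤ C := by
    set S : Finset (Fin n) := Finset.univ.filter fun i => x i ≠ 0 with hS
    have hxS : ∀ i ∉ S, x i = 0 := by
      intro i hi
      by_contra hcon
      exact hi (Finset.mem_filter.mpr ⟨Finset.mem_univ _, hcon⟩)
    have hAS : ∑ i ∈ S, |x i| = A := by
      rw [hA]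
      exact Finset.sum_subset (Finset.subset_univ S)
        (fun i _ hi => by rw [hxS i hi, abs_zero])
    have hsplit : ∑ i ∈ S, |x i + h i| + ∑ i ∈ Sᶜ, |x i + h i| = C :=
      Finset.sum_add_sum_compl S _
    have hSc : ∑ i ∈ Sᶜ, |x i + h i| = ∑ i ∈ Sᶜ, |h i| :=
      Finset.sum_congr rfl fun i hi => by
        rw [hxS i (Finset.mem_compl.mp hi), zero_add]
    have hSlb : ∑ i ∈ S, (|x i| - |h i|) ≤ ∑ i ∈ S, |x i + h i| := by
      apply Finset.sum_le_sum
      intro i _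
      have := abs_sub_abs_le_abs_sub (x i) (-h i)
      simpa [sub_neg_eq_add] using this
    rw [Finset.sum_sub_distrib, hAS] at hSlb
    -- swap S for T
    have hswap : ∑ i ∈ S, |h i| ≤ a := by
      rw [ha]
      exact aux_sum_abs_le_sum_abs S T h (le_trans hsparse hT.ge) hTlargest
    have htot1 : ∑ i ∈ S, |h i| + ∑ i ∈ Sᶜ, |h i| = ∑ i, |h i| :=
      Finset.sum_add_sum_compl S _
    have htot2 : a + ∑ i ∈ Tᶜ, |h i| = ∑ i, |h i| :=
      Finset.sum_add_sum_compl T _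
    linarith
  -- Step 3: Hp ≤ aP + bP via Minkowski
  have hHpsplit : Hp ≤ aP + bP := by
    have := Real.Lp_add_le Finset.univ (fun i => if i ∈ T then h i else 0)
      (fun i => if i ∈ T then 0 else h i) hp.le
    have heq : ∀ i : Fin n,
        |(if i ∈ T then h i else 0) + (if i ∈ T then 0 else h i)| = |h i| := by
      intro i; split <;> simp
    calc Hp = (∑ i, |(if i ∈ T then h i else 0) + (if i ∈ T then 0 else h i)| ^ p) ^ (1/p) := by
          rw [hHp]; congr 1; exact Finset.sum_congr rfl fun i _ => by rw [heq i]
      _ ≤ aP + bP := this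
  -- Step 4: Hölder : a ≤ k^(1-1/p) * aP
  have hHolder : a ≤ (k : ℝ) ^ (1 - 1/p) * aP := by
    have hconj : p.HolderConjugate (p / (p - 1)) := Real.HolderConjugate.conjExponent hp
    have := Real.inner_le_Lp_mul_Lq_of_nonneg T hconj
      (f := fun i => |h i|) (g := fun _ => (1:ℝ))
      (fun i _ => abs_nonneg _) (fun i _ => zero_le_one)
    simp only [mul_one, Real.one_rpow, Finset.sum_const, nsmul_eq_mul, hT] at this
    have hkey : ∑ i, |(if i ∈ T then h i else 0)| ^ p = ∑ i ∈ T, |h i| ^ p := by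
      rw [← Finset.sum_subset (Finset.subset_univ T)
        (fun i _ hi => by simp [if_neg hi, Real.zero_rpow hp0.ne'])]
      exact Finset.sum_congr rfl fun i hi => by rw [if_pos hi]
    have hexp : 1 / (p / (p - 1)) = 1 - 1/p := by
      field_simp
    have haPT : (∑ i ∈ T, |h i| ^ p) ^ (1/p) = aP := by rw [haP, hkey]
    calc a ≤ (∑ i ∈ T, |h i| ^ p) ^ (1/p) * (k:ℝ) ^ (1 / (p / (p - 1))) := this
      _ = (k : ℝ) ^ (1 - 1/p) * aP := by rw [haPT, hexp, mul_comm]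
  -- Step 5: express goal sums
  have hbT : ∑ i, |(if i ∈ T then 0 else h i)| = ∑ i ∈ Tᶜ, |h i| := by
    rw [← Finset.sum_subset (Finset.subset_univ Tᶜ)]
    · exact Finset.sum_congr rfl fun i hi => by
        rw [if_neg (Finset.mem_compl.mp hi)]
    · intro i _ hi
      rw [Finset.mem_compl, not_not] at hi
      rw [if_pos hi, abs_zero]
  rw [hbT]
  have hqγ : 0 ≤ q * γ := le_of_lt (mul_pos hq0 hγ)
  nlinarith [mul_le_mul_of_nonneg_left hHpsplit hqγ]
end

section
/- Let g : ℝⁿ → ℝ be continuously differentiable with L-Lipschitz gradient, let f : ℝ → ℝ be concave and differentiable, let h : ℝⁿ → ℝ be convex, and let Ω ⊆ ℝⁿ be closed convex. Fix β > L and x_k ∈ Ω, and define Q(x) = F(x_k) + f'(h(x_k))(h(x) − h(x_k)) + ⟨∇g(x_k), x − x_k⟩ + (β/2)‖x − x_k‖², where F(x) = f(h(x)) + g(x). If additionally f'(h(x_k)) ≥ 0, then for all x ∈ Ω: F(x) ≤ Q(x) − ((β−L)/2)‖x − x_k‖². -/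
open scoped RealInnerProductSpace
open Set

lemma descent_lemma {n : ℕ}
    (g : EuclideanSpace ℝ (Fin n) → ℝ) (g' : EuclideanSpace ℝ (Fin n) → EuclideanSpace ℝ (Fin n))
    (hg : ∀ x, HasGradientAt g (g' x) x)
    (L : ℝ) (hL : 0 ≤ L) (hlip : ∀ x y, ‖g' x - g' y‖ ≤ L * ‖x - y‖)
    (xk x : EuclideanSpace ℝ (Fin n)) :
    g x ≤ g xk + ⟪g' xk, x - xk⟫ + L / 2 * ‖x - xk‖ ^ 2 := by
  set v := x - xk with hv
  set c : ℝ → EuclideanSpace ℝ (Fin n) := fun t => xk + t • v with hcdef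
  have hc : ∀ t : ℝ, HasDerivAt c v t := by
    intro t
    simpa [hcdef] using ((hasDerivAt_id t).smul_const v).const_add xk
  set ψ : ℝ → ℝ := fun t => g (c t) - t * ⟪g' xk, v⟫ - L * t ^ 2 / 2 * ‖v‖ ^ 2 with hψdef
  have hψ' : ∀ t : ℝ, HasDerivAt ψ (⟪g' (c t), v⟫ - ⟪g' xk, v⟫ - L * t * ‖v‖ ^ 2) t := by
    intro t
    have h1 : HasDerivAt (fun t => g (c t)) (⟪g' (c t), v⟫) t := by
      have := ((hg (c t)).hasFDerivAt).comp_hasDerivAt t (hc t)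
      exact this
    have h2 : HasDerivAt (fun t : ℝ => t * ⟪g' xk, v⟫) (⟪g' xk, v⟫) t := by
      simpa using (hasDerivAt_id t).mul_const (⟪g' xk, v⟫)
    have h3 : HasDerivAt (fun t : ℝ => L * t ^ 2 / 2 * ‖v‖ ^ 2) (L * t * ‖v‖ ^ 2) t := by
      have := (((hasDerivAt_pow 2 t).const_mul L).div_const 2).mul_const (‖v‖ ^ 2)
      exact this.congr_deriv (by ring)
    exact (h1.sub h2).sub h3
  have key : ψ 1 ≤ ψ 0 := by
    have hcont : ContinuousOn ψ (Icc 0 1) := fun t _ => (hψ' t).continuousAt.continuousWithinAt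
    have hderiv : ∀ t ∈ interior (Icc (0:ℝ) 1), deriv ψ t ≤ 0 := by
      intro t ht
      rw [interior_Icc] at ht
      rw [(hψ' t).deriv]
      have hn : ‖c t - xk‖ = t * ‖v‖ := by
        have : c t - xk = t • v := by simp [hcdef]
        rw [this, norm_smul, Real.norm_eq_abs, abs_of_pos ht.1]
      have hb : ⟪g' (c t) - g' xk, v⟫ ≤ L * t * ‖v‖ ^ 2 := by
        calc ⟪g' (c t) - g' xk, v⟫ ≤ ‖g' (c t) - g' xk‖ * ‖v‖ := real_inner_le_norm _ _
          _ ≤ L * ‖c t - xk‖ * ‖v‖ := by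
              apply mul_le_mul_of_nonneg_right (hlip _ _) (norm_nonneg _)
          _ = L * t * ‖v‖ ^ 2 := by rw [hn]; ring
      have := inner_sub_left (𝕜 := ℝ) (g' (c t)) (g' xk) v
      rw [this] at hb
      linarith
    have := antitoneOn_of_deriv_nonpos (convex_Icc 0 1) hcont
      (fun t ht => ((hψ' t).differentiableAt).differentiableWithinAt) hderiv
    exact this (by norm_num) (by norm_num) zero_le_one
  have h0 : ψ 0 = g xk := by simp [hψdef, hcdef]
  have h1 : ψ 1 = g x - ⟪g' xk, v⟫ - L / 2 * ‖v‖ ^ 2 := by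
    have : c 1 = x := by simp [hcdef, hv]
    simp only [hψdef, this, one_mul, one_pow]
    ring
  rw [h0, h1] at key
  linarith

lemma concave_tangent {f f' : ℝ → ℝ} (hf : ∀ t, HasDerivAt f (f' t) t)
    (hconc : ConcaveOn ℝ Set.univ f) (a b : ℝ) :
    f b ≤ f a + f' a * (b - a) := by
  rcases lt_trichotomy a b with hab | rfl | hab
  · have := hconc.slope_le_of_hasDerivAt (mem_univ a) (mem_univ b) hab (hf a)
    rw [slope_def_field] at this
    have hd : 0 < b - a := by linarith
    rw [div_le_iff₀ hd] at this
    linarith [this]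
  · simp
  · have := hconc.le_slope_of_hasDerivAt (mem_univ b) (mem_univ a) hab (hf a)
    rw [slope_def_field] at this
    have hd : 0 < a - b := by linarith
    rw [le_div_iff₀ hd] at this
    linarith [this]

theorem majorization_property (n : ℕ)
    (g : EuclideanSpace ℝ (Fin n) → ℝ) (g' : EuclideanSpace ℝ (Fin n) → EuclideanSpace ℝ (Fin n))
    (hg : ∀ x, HasGradientAt g (g' x) x)
    (L : ℝ) (hL : 0 ≤ L) (hlip : ∀ x y, ‖g' x - g' y‖ ≤ L * ‖x - y‖)
    (f f' : ℝ → ℝ) (hf : ∀ t, HasDerivAt f (f' t) t) (hconc : ConcaveOn ℝ Set.univ f)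
    (h : EuclideanSpace ℝ (Fin n) → ℝ) (hconv : ConvexOn ℝ Set.univ h)
    (Ω : Set (EuclideanSpace ℝ (Fin n))) (hΩconv : Convex ℝ Ω) (hΩcl : IsClosed Ω)
    (β : ℝ) (hβ : L < β) (xk : EuclideanSpace ℝ (Fin n)) (hxk : xk ∈ Ω)
    (hpos : 0 ≤ f' (h xk)) :
    ∀ x ∈ Ω,
      f (h x) + g x ≤
        ((f (h xk) + g xk) + f' (h xk) * (h x - h xk) + ⟪g' xk, x - xk⟫
            + β / 2 * ‖x - xk‖ ^ 2)
          - (β - L) / 2 * ‖x - xk‖ ^ 2 := by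
  intro x hx
  have hd := descent_lemma g g' hg L hL hlip xk x
  have ht := concave_tangent hf hconc (h xk) (h x)
  have : β / 2 * ‖x - xk‖ ^ 2 - (β - L) / 2 * ‖x - xk‖ ^ 2 = L / 2 * ‖x - xk‖ ^ 2 := by ring
  linarith
end
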